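/- Let X and Y be nonzero 2×2 complex matrices with X · Yᴴ = 0 and Xᴴ · Y = 0. Then there exist a unitary 2×2 matrix V, positive reals α and β, and vectors η₊, η₋ ∈ ℂ² forming an orthonormal basis (⟨η₊,η₊⟩ = ⟨η₋,η₋⟩ = 1, ⟨η₊,η₋⟩ = 0) such that X = α • (V · (η₊ η₊ᴴ)) and Y = β • (V · (η₋ η₋ᴴ)), where η ηᴴ denotes the rank-one matrix vecMulVec η (star η). -/

import Mathlib

open Matrix

namespace CPD

lemma vmv_conjT (a b : Fin 2 → ℂ) :
    (vecMulVec a (star b))ᴴ = vecMulVec b (star a) := by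
  ext i j
  simp [vecMulVec_apply, conjTranspose_apply, mul_comm]

lemma vmv_mul (a b c d : Fin 2 → ℂ) :
    vecMulVec a b * vecMulVec c d = (b ⬝ᵥ c) • vecMulVec a d := by
  ext i j
  simp only [vecMulVec_apply, mul_apply, dotProduct, Matrix.smul_apply, smul_eq_mul,
    Finset.sum_mul, Finset.mul_sum]
  apply Finset.sum_congr rfl
  intro k _
  ring

lemma vmv_ne_zero {a b : Fin 2 → ℂ} (ha : a ≠ 0) (hb : b ≠ 0) :
    vecMulVec a (star b) ≠ 0 := by
  obtain ⟨i, hi⟩ := Function.ne_iff.mp ha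
  obtain ⟨j, hj⟩ := Function.ne_iff.mp hb
  intro h
  have := congrFun (congrFun h i) j
  simp [vecMulVec_apply, mul_eq_zero] at this
  rcases this with h' | h' <;> simp_all

lemma flip_orth {u v : Fin 2 → ℂ} (h : star u ⬝ᵥ v = 0) : star v ⬝ᵥ u = 0 := by
  rw [star_dotProduct]
  simp [h]

lemma exists_unit {v : Fin 2 → ℂ} (hv : v ≠ 0) :
    ∃ t : ℝ, 0 < t ∧ star ((t:ℂ) • v) ⬝ᵥ ((t:ℂ) • v) = 1 := by
  have hd : star v ⬝ᵥ v = ((Complex.normSq (v 0) + Complex.normSq (v 1) : ℝ) : ℂ) := by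
    push_cast
    simp [dotProduct, Fin.sum_univ_two, Pi.star_apply, Complex.normSq_eq_conj_mul_self]
  have hr : 0 < Complex.normSq (v 0) + Complex.normSq (v 1) := by
    obtain ⟨i, hi⟩ := Function.ne_iff.mp hv
    have h0 := Complex.normSq_nonneg (v 0)
    have h1 := Complex.normSq_nonneg (v 1)
    have hi' : v i ≠ 0 := by simpa using hi
    have hpos := Complex.normSq_pos.mpr hi'
    fin_cases i <;> simp_all <;> nlinarith [Complex.normSq_pos.mpr hi]
  set r := Complex.normSq (v 0) + Complex.normSq (v 1)
  refine ⟨1 / Real.sqrt r, by positivity, ?_⟩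
  rw [star_smul, smul_dotProduct, dotProduct_smul, hd]
  have hs : Real.sqrt r ≠ 0 := by positivity
  have : (Real.sqrt r) * Real.sqrt r = r := Real.mul_self_sqrt hr.le
  push_cast
  simp only [map_div₀, _root_.map_one, Complex.conj_ofReal, smul_eq_mul]
  field_simp
  norm_cast
  have hc : ((r:ℝ):ℂ) = ((Real.sqrt r:ℝ):ℂ) * ((Real.sqrt r:ℝ):ℂ) := by exact_mod_cast this.symm
  have hs' : ((Real.sqrt r:ℝ):ℂ) ≠ 0 := by exact_mod_cast hs
  rw [Complex.star_def, Complex.conj_ofReal, hc]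
  push_cast
  field_simp

lemma rank_one (X : Matrix (Fin 2) (Fin 2) ℂ) (s : Fin 2 → ℂ)
    (hs : s ≠ 0) (h : ∀ i, X i ⬝ᵥ star s = 0) :
    ∃ ξ η : Fin 2 → ℂ, η ≠ 0 ∧ X = vecMulVec ξ (star η) := by
  set η : Fin 2 → ℂ := ![s 1, -(s 0)] with hη
  have hηne : η ≠ 0 := by
    intro h0
    apply hs
    funext k
    have e0 := congrFun h0 0
    have e1 := congrFun h0 1
    simp [hη] at e0 e1
    fin_cases k <;> simp_all
  have key : ∀ i, X i 0 * starRingEnd ℂ (s 0) + X i 1 * starRingEnd ℂ (s 1) = 0 := by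
    intro i
    have := h i
    simpa [dotProduct, Fin.sum_univ_two, Complex.star_def] using this
  have hcase : s 0 ≠ 0 ∨ s 1 ≠ 0 := by
    by_contra hc
    push_neg at hc
    apply hs; funext k; fin_cases k <;> simp [hc.1, hc.2]
  rcases hcase with h0 | h01
  · refine ⟨fun i => -X i 1 / starRingEnd ℂ (s 0), η, hηne, ?_⟩
    ext i k
    have hk := key i
    have hs0 : starRingEnd ℂ (s 0) ≠ 0 := by simpa using h0
    fin_cases k <;>
    · simp only [vecMulVec_apply, hη, Pi.star_apply, Complex.star_def,
        Fin.zero_eta, Fin.mk_one,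
        Matrix.cons_val_zero, Matrix.cons_val_one, Matrix.head_cons, map_neg]
      field_simp
      try linear_combination hk
  · refine ⟨fun i => X i 0 / starRingEnd ℂ (s 1), η, hηne, ?_⟩
    ext i k
    have hk := key i
    have hs1 : starRingEnd ℂ (s 1) ≠ 0 := by simpa using h01
    fin_cases k <;>
    · simp only [vecMulVec_apply, hη, Pi.star_apply, Complex.star_def,
        Fin.zero_eta, Fin.mk_one,
        Matrix.cons_val_zero, Matrix.cons_val_one, Matrix.head_cons, map_neg]
      field_simp
      try linear_combination hk

lemma completeness (u v : Fin 2 → ℂ) (hu : star u ⬝ᵥ u = 1) (hv : star v ⬝ᵥ v = 1)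
    (huv : star u ⬝ᵥ v = 0) :
    vecMulVec u (star u) + vecMulVec v (star v) = 1 := by
  have hvu : star v ⬝ᵥ u = 0 := by rw [star_dotProduct]; simp [huv]
  have hu' : starRingEnd ℂ (u 0) * u 0 + starRingEnd ℂ (u 1) * u 1 = 1 := by
    simpa [dotProduct, Fin.sum_univ_two, Complex.star_def] using hu
  have hv' : starRingEnd ℂ (v 0) * v 0 + starRingEnd ℂ (v 1) * v 1 = 1 := by
    simpa [dotProduct, Fin.sum_univ_two, Complex.star_def] using hv
  have huv' : starRingEnd ℂ (u 0) * v 0 + starRingEnd ℂ (u 1) * v 1 = 0 := by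
    simpa [dotProduct, Fin.sum_univ_two, Complex.star_def] using huv
  have hvu' : starRingEnd ℂ (v 0) * u 0 + starRingEnd ℂ (v 1) * u 1 = 0 := by
    simpa [dotProduct, Fin.sum_univ_two, Complex.star_def] using hvu
  set U : Matrix (Fin 2) (Fin 2) ℂ := Matrix.of fun i j => if j = 0 then u i else v i with hU
  have h1 : star U * U = 1 := by
    ext j k
    fin_cases j <;> fin_cases k <;>
      simp only [hU, mul_apply, star_apply, Matrix.of_apply, Fin.sum_univ_two,
        Matrix.one_apply, Complex.star_def] <;>
      norm_num
    · linear_combination hu'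
    · linear_combination huv'
    · linear_combination hvu'
    · linear_combination hv'
  have h2 : U * star U = 1 := mul_eq_one_comm.mpr h1
  calc vecMulVec u (star u) + vecMulVec v (star v) = U * star U := by
        ext i k
        simp [hU, mul_apply, Fin.sum_univ_two, vecMulVec_apply, Complex.star_def]
        try ring
    _ = 1 := h2

end CPD


/-- Common polar decomposition of a pair of transition matrices: if `X, Y` are nonzero
`2×2` complex matrices with `X Yᴴ = 0` and `Xᴴ Y = 0`, then there are a unitary `V`,
positive reals `α, β` and an orthonormal basis `η₊, η₋` of `ℂ²` with
`X = α V |η₊⟩⟨η₊|` and `Y = β V |η₋⟩⟨η₋|`. -/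
theorem common_polar_decomposition (X Y : Matrix (Fin 2) (Fin 2) ℂ)
    (hX : X ≠ 0) (hY : Y ≠ 0) (h1 : X * Yᴴ = 0) (h2 : Xᴴ * Y = 0) :
    ∃ (V : Matrix (Fin 2) (Fin 2) ℂ) (α β : ℝ) (ηp ηm : Fin 2 → ℂ),
      V ∈ Matrix.unitaryGroup (Fin 2) ℂ ∧ 0 < α ∧ 0 < β
        ∧ star ηp ⬝ᵥ ηp = 1 ∧ star ηm ⬝ᵥ ηm = 1 ∧ star ηp ⬝ᵥ ηm = 0
        ∧ X = (α : ℂ) • (V * vecMulVec ηp (star ηp))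
        ∧ Y = (β : ℂ) • (V * vecMulVec ηm (star ηm)) := by
  classical
  -- nonzero rows
  obtain ⟨j0, hj0⟩ : ∃ j, Y j ≠ 0 := by
    by_contra hc; push_neg at hc
    exact hY (by ext i k; simpa using congrFun (hc i) k)
  obtain ⟨i0, hi0⟩ : ∃ i, X i ≠ 0 := by
    by_contra hc; push_neg at hc
    exact hX (by ext i k; simpa using congrFun (hc i) k)
  -- rank one structure of X
  have hXrows : ∀ i, X i ⬝ᵥ star (Y j0) = 0 := by
    intro i
    have := congrFun (congrFun h1 i) j0
    simpa [mul_apply, dotProduct, conjTranspose_apply] using this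
  obtain ⟨ξ, η, hηne, hXeq⟩ := CPD.rank_one X (Y j0) hj0 hXrows
  have hξne : ξ ≠ 0 := by
    intro h0; apply hX; rw [hXeq, h0]
    ext i k; simp [vecMulVec_apply]
  -- rank one structure of Y
  have hYX : Y * Xᴴ = 0 := by
    have := congrArg conjTranspose h1
    simpa [conjTranspose_mul] using this
  have hYrows : ∀ i, Y i ⬝ᵥ star (X i0) = 0 := by
    intro i
    have := congrFun (congrFun hYX i) i0
    simpa [mul_apply, dotProduct, conjTranspose_apply] using this
  obtain ⟨ζ, μ, hμne, hYeq⟩ := CPD.rank_one Y (X i0) hi0 hYrows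
  have hζne : ζ ≠ 0 := by
    intro h0; apply hY; rw [hYeq, h0]
    ext i k; simp [vecMulVec_apply]
  -- orthogonality of the factors
  have hημ : star η ⬝ᵥ μ = 0 := by
    have hprod : (star η ⬝ᵥ μ) • vecMulVec ξ (star ζ) = 0 := by
      rw [← CPD.vmv_mul]
      have : (vecMulVec ζ (star μ))ᴴ = vecMulVec μ (star ζ) := CPD.vmv_conjT ζ μ
      rw [← this, ← hYeq, ← hXeq, h1]
    rcases smul_eq_zero.mp hprod with h' | h'
    · exact h'
    · exact absurd h' (CPD.vmv_ne_zero hξne hζne)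
  have hξζ : star ξ ⬝ᵥ ζ = 0 := by
    have hprod : (star ξ ⬝ᵥ ζ) • vecMulVec η (star μ) = 0 := by
      rw [← CPD.vmv_mul]
      have : (vecMulVec ξ (star η))ᴴ = vecMulVec η (star ξ) := CPD.vmv_conjT ξ η
      rw [← this, ← hXeq, ← hYeq, h2]
    rcases smul_eq_zero.mp hprod with h' | h'
    · exact h'
    · exact absurd h' (CPD.vmv_ne_zero hηne hμne)
  -- normalize
  obtain ⟨t1, ht1, he⟩ := CPD.exists_unit hξne
  obtain ⟨t2, ht2, hp⟩ := CPD.exists_unit hηne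
  obtain ⟨t3, ht3, hf⟩ := CPD.exists_unit hζne
  obtain ⟨t4, ht4, hm⟩ := CPD.exists_unit hμne
  set e : Fin 2 → ℂ := (t1:ℂ) • ξ with hedef
  set ηp : Fin 2 → ℂ := (t2:ℂ) • η with hpdef
  set f : Fin 2 → ℂ := (t3:ℂ) • ζ with hfdef
  set ηm : Fin 2 → ℂ := (t4:ℂ) • μ with hmdef
  have hpm : star ηp ⬝ᵥ ηm = 0 := by
    rw [hpdef, hmdef, star_smul, smul_dotProduct, dotProduct_smul, hημ]
    simp
  have hmp : star ηm ⬝ᵥ ηp = 0 := CPD.flip_orth hpm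
  have hef : star e ⬝ᵥ f = 0 := by
    rw [hedef, hfdef, star_smul, smul_dotProduct, dotProduct_smul, hξζ]
    simp
  have hfe : star f ⬝ᵥ e = 0 := CPD.flip_orth hef
  -- the unitary
  set V : Matrix (Fin 2) (Fin 2) ℂ :=
    vecMulVec e (star ηp) + vecMulVec f (star ηm) with hVdef
  have hVsV : star V * V = 1 := by
    have hstar : star V = vecMulVec ηp (star e) + vecMulVec ηm (star f) := by
      show Vᴴ = _
      rw [hVdef, conjTranspose_add, CPD.vmv_conjT, CPD.vmv_conjT]
    rw [hstar, hVdef, add_mul, mul_add, mul_add, CPD.vmv_mul, CPD.vmv_mul,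
      CPD.vmv_mul, CPD.vmv_mul, he, hef, hfe, hf]
    simp only [one_smul, zero_smul, add_zero, zero_add]
    exact CPD.completeness ηp ηm hp hm hpm
  have hVmem : V ∈ Matrix.unitaryGroup (Fin 2) ℂ :=
    Matrix.mem_unitaryGroup_iff.mpr (mul_eq_one_comm.mpr hVsV)
  -- the decompositions
  have hVp : V * vecMulVec ηp (star ηp) = vecMulVec e (star ηp) := by
    rw [hVdef, add_mul, CPD.vmv_mul, CPD.vmv_mul, hp, hmp]
    simp
  have hVm : V * vecMulVec ηm (star ηm) = vecMulVec f (star ηm) := by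
    rw [hVdef, add_mul, CPD.vmv_mul, CPD.vmv_mul, hm, hpm]
    simp
  have hscaleX : vecMulVec e (star ηp) = ((t1 * t2 : ℝ) : ℂ) • vecMulVec ξ (star η) := by
    ext i k
    rw [hedef, hpdef]
    simp [vecMulVec_apply, Complex.star_def, Complex.conj_ofReal]
    ring
  have hscaleY : vecMulVec f (star ηm) = ((t3 * t4 : ℝ) : ℂ) • vecMulVec ζ (star μ) := by
    ext i k
    rw [hfdef, hmdef]
    simp [vecMulVec_apply, Complex.star_def, Complex.conj_ofReal]
    ring
  refine ⟨V, 1 / (t1 * t2), 1 / (t3 * t4), ηp, ηm, hVmem, by positivity, by positivity,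
    hp, hm, hpm, ?_, ?_⟩
  · rw [hVp, hscaleX, ← hXeq, smul_smul]
    have ht : t1 * t2 ≠ 0 := by positivity
    rw [show ((1 / (t1 * t2) : ℝ) : ℂ) * ((t1 * t2 : ℝ) : ℂ) = 1 by
      have h' : ((t1 * t2 : ℝ) : ℂ) ≠ 0 := by exact_mod_cast ht
      push_cast at h' ⊢
      field_simp
      exact div_self h']
    simp
  · rw [hVm, hscaleY, ← hYeq, smul_smul]
    have ht : t3 * t4 ≠ 0 := by positivity
    rw [show ((1 / (t3 * t4) : ℝ) : ℂ) * ((t3 * t4 : ℝ) : ℂ) = 1 by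
      have h' : ((t3 * t4 : ℝ) : ℂ) ≠ 0 := by exact_mod_cast ht
      push_cast at h' ⊢
      field_simp
      exact div_self h']
    simp
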